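/- Fix y ∈ ℝⁿ, a matrix X ∈ ℝ^{n×p}, a parameter λ₂ > 0, and a vector β̂ ∈ ℝᵖ such that the residual ε̂ = y − X β̂ is nonzero. Then β̂ is a global minimizer of the square-root Lasso objective β ↦ ‖y − X β‖₂ + λ₂ ‖β‖₁ if and only if β̂ is a global minimizer of the classical Lasso objective β ↦ ½‖y − X β‖₂² + λ₁ ‖β‖₁ with λ₁ = λ₂ · ‖ε̂‖₂. -/

import Mathlib

open Matrix

/-- Euclidean norm of a vector in `ℝⁿ`. -/
noncomputable def l2norm {n : ℕ} (v : Fin n → ℝ) : ℝ := Real.sqrt (∑ i, (v i) ^ 2)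

/-- L1 norm of a vector in `ℝᵖ`. -/
def l1norm {p : ℕ} (b : Fin p → ℝ) : ℝ := ∑ j, |b j|

lemma l2norm_eq {n : ℕ} (v : Fin n → ℝ) :
    l2norm v = ‖(WithLp.equiv 2 (Fin n → ℝ)).symm v‖ := by
  rw [EuclideanSpace.norm_eq]
  simp [l2norm, sq_abs]

lemma l2norm_nonneg {n : ℕ} (v : Fin n → ℝ) : 0 ≤ l2norm v := Real.sqrt_nonneg _

lemma l2norm_pos {n : ℕ} {v : Fin n → ℝ} (hv : v ≠ 0) : 0 < l2norm v := by
  rw [l2norm_eq, norm_pos_iff]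
  simpa using hv

lemma sq_l2norm {n : ℕ} (v : Fin n → ℝ) : l2norm v ^ 2 = ∑ i, (v i) ^ 2 :=
  Real.sq_sqrt (by positivity)

lemma l2norm_comb {n : ℕ} (u v : Fin n → ℝ) {a b : ℝ} (ha : 0 ≤ a) (hb : 0 ≤ b) :
    l2norm (a • u + b • v) ≤ a * l2norm u + b * l2norm v := by
  simp only [l2norm_eq]
  have h : (WithLp.equiv 2 (Fin n → ℝ)).symm (a • u + b • v)
      = a • (WithLp.equiv 2 (Fin n → ℝ)).symm u + b • (WithLp.equiv 2 (Fin n → ℝ)).symm v := by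
    simp
  rw [h]
  calc ‖_ + _‖ ≤ ‖a • (WithLp.equiv 2 (Fin n → ℝ)).symm u‖
        + ‖b • (WithLp.equiv 2 (Fin n → ℝ)).symm v‖ := norm_add_le _ _
    _ = a * ‖(WithLp.equiv 2 (Fin n → ℝ)).symm u‖
        + b * ‖(WithLp.equiv 2 (Fin n → ℝ)).symm v‖ := by
        rw [norm_smul, norm_smul, Real.norm_of_nonneg ha, Real.norm_of_nonneg hb]

lemma l1norm_comb {p : ℕ} (u v : Fin p → ℝ) {a b : ℝ} (ha : 0 ≤ a) (hb : 0 ≤ b) :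
    l1norm (a • u + b • v) ≤ a * l1norm u + b * l1norm v := by
  simp only [l1norm, Finset.mul_sum, ← Finset.sum_add_distrib]
  refine Finset.sum_le_sum fun j _ => ?_
  calc |(a • u + b • v) j| = |a * u j + b * v j| := rfl
    _ ≤ |a * u j| + |b * v j| := abs_add_le _ _
    _ = a * |u j| + b * |v j| := by
        rw [abs_mul, abs_mul, abs_of_nonneg ha, abs_of_nonneg hb]

/-- for `λ₂ > 0` and `β̂` with nonzero residual `ε̂ = y − Xβ̂`,
`β̂` globally minimizes the square-root Lasso objective with parameter `λ₂`
iff it globally minimizes the classical Lasso objective with `λ₁ = λ₂ ‖ε̂‖₂`. -/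
theorem sqrtLasso_iff_lasso {n p : ℕ} (X : Matrix (Fin n) (Fin p) ℝ) (y : Fin n → ℝ)
    (lam2 : ℝ) (hlam2 : 0 < lam2) (bhat : Fin p → ℝ)
    (hres : y - X.mulVec bhat ≠ 0) :
    (∀ b : Fin p → ℝ,
        l2norm (y - X.mulVec bhat) + lam2 * l1norm bhat ≤
          l2norm (y - X.mulVec b) + lam2 * l1norm b)
      ↔
    (∀ b : Fin p → ℝ,
        (1 / 2) * (∑ i, (y i - X.mulVec bhat i) ^ 2) +
            (lam2 * l2norm (y - X.mulVec bhat)) * l1norm bhat ≤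
          (1 / 2) * (∑ i, (y i - X.mulVec b i) ^ 2) +
            (lam2 * l2norm (y - X.mulVec bhat)) * l1norm b) := by
  set c : ℝ := l2norm (y - X.mulVec bhat) with hc_def
  have hc : 0 < c := l2norm_pos hres
  have hsum : ∀ b : Fin p → ℝ,
      (∑ i, (y i - X.mulVec b i) ^ 2) = l2norm (y - X.mulVec b) ^ 2 := by
    intro b; rw [sq_l2norm]; rfl
  constructor
  · -- sqrt-lasso min ⇒ lasso min
    intro H b
    have h := H b
    rw [hsum bhat, hsum b]
    set t : ℝ := l2norm (y - X.mulVec b)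
    have ht : 0 ≤ t := l2norm_nonneg _
    nlinarith [sq_nonneg (t - c), mul_le_mul_of_nonneg_left h hc.le]
  · -- lasso min ⇒ sqrt-lasso min
    intro H b
    set t : ℝ := l2norm (y - X.mulVec b) with ht_def
    set B : ℝ := l1norm b
    set Bh : ℝ := l1norm bhat
    -- key: lam2 * c * (Bh - B) ≤ c * (t - c)
    have key : lam2 * c * (Bh - B) ≤ c * (t - c) := by
      refine le_of_forall_pos_le_add fun ε hε => ?_
      set K : ℝ := (t - c) ^ 2 / 2 with hK
      have hK0 : 0 ≤ K := by positivity
      set s : ℝ := min 1 (ε / (K + 1)) with hs_def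
      have hs0 : 0 < s := lt_min one_pos (by positivity)
      have hs1 : s ≤ 1 := min_le_left _ _
      have hsK : s * K ≤ ε := by
        have h1 : s ≤ ε / (K + 1) := min_le_right _ _
        have : s * K ≤ (ε / (K + 1)) * (K + 1) := by
          have := mul_le_mul h1 (by linarith : K ≤ K + 1) hK0 (by positivity)
          linarith
        rwa [div_mul_cancel₀ ε (by positivity : (K : ℝ) + 1 ≠ 0)] at this
      -- evaluate the lasso optimality at the convex combination
      have hcomb := H ((1 - s) • bhat + s • b)
      rw [hsum bhat, hsum] at hcomb
      have hres_comb : y - X.mulVec ((1 - s) • bhat + s • b)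
          = (1 - s) • (y - X.mulVec bhat) + s • (y - X.mulVec b) := by
        funext i
        simp only [Matrix.mulVec_add, Matrix.mulVec_smul, Pi.add_apply, Pi.sub_apply,
          Pi.smul_apply, smul_eq_mul]
        ring
      have ht2 : l2norm (y - X.mulVec ((1 - s) • bhat + s • b)) ≤ (1 - s) * c + s * t := by
        rw [hres_comb]
        exact l2norm_comb _ _ (by linarith) hs0.le
      have hB2 : l1norm ((1 - s) • bhat + s • b) ≤ (1 - s) * Bh + s * B :=
        l1norm_comb _ _ (by linarith) hs0.le
      have htnn : 0 ≤ l2norm (y - X.mulVec ((1 - s) • bhat + s • b)) := l2norm_nonneg _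
      have hT : 0 ≤ (1 - s) * c + s * t := by
        have := l2norm_nonneg (y - X.mulVec b)
        nlinarith
      have hsq : l2norm (y - X.mulVec ((1 - s) • bhat + s • b)) ^ 2
          ≤ ((1 - s) * c + s * t) ^ 2 := by nlinarith
      -- combine: ½c² + λ₂c Bh ≤ ½((1-s)c+st)² + λ₂c((1-s)Bh+sB)
      have main : (1/2 : ℝ) * c ^ 2 + lam2 * c * Bh
          ≤ (1/2) * ((1 - s) * c + s * t) ^ 2 + lam2 * c * ((1 - s) * Bh + s * B) := by
        calc (1/2 : ℝ) * c ^ 2 + lam2 * c * Bh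
            ≤ (1/2) * l2norm (y - X.mulVec ((1 - s) • bhat + s • b)) ^ 2
              + lam2 * c * l1norm ((1 - s) • bhat + s • b) := hcomb
          _ ≤ _ := by
              have := mul_le_mul_of_nonneg_left hB2 (by positivity : (0:ℝ) ≤ lam2 * c)
              linarith
      -- expand and divide by s
      have expand : (1/2 : ℝ) * ((1 - s) * c + s * t) ^ 2
          = (1/2) * c ^ 2 + s * (c * (t - c)) + s ^ 2 * K := by
        rw [hK]; ring
      have hdiv : s * (lam2 * c * (Bh - B)) ≤ s * (c * (t - c) + s * K) := by
        rw [expand] at main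
        linarith [main]
      have h1 := (mul_le_mul_iff_right₀ hs0).mp hdiv
      linarith [h1, hsK]
    have h2 : c * (lam2 * (Bh - B)) ≤ c * (t - c) := by linear_combination key
    have h3 := (mul_le_mul_iff_right₀ hc).mp h2
    linarith [h3]
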